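/- Let c > 0 and let u, v ∈ ℂ² be vectors with ‖u‖² = ‖v‖² = c. Then the 2×2 complex matrix M = (1/(2c)) • (vecMulVec u (star u) + vecMulVec v (star v)) is Hermitian, and its multiset of eigenvalues is {1/2 + |⟨u, v⟩|/(2c), 1/2 − |⟨u, v⟩|/(2c)}. -/

import Mathlib

open scoped BigOperators InnerProductSpace

lemma pair_eq_of_sum_prod (a b x y : ℝ) (hs : a + b = x + y) (hp : a * b = x * y) :
    ({a, b} : Multiset ℝ) = {x, y} := by
  have h : (a - x) * (a - y) = 0 := by linear_combination a * hs - hp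
  rcases mul_eq_zero.mp h with h1 | h1
  · have hax : a = x := by linarith
    have hby : b = y := by linarith
    rw [hax, hby]
  · have hay : a = y := by linarith
    have hbx : b = x := by linarith
    rw [hay, hbx]
    exact Multiset.cons_swap _ _ _

lemma trace_eq_sum_eig (A : Matrix (Fin 2) (Fin 2) ℂ) (hA : A.IsHermitian) :
    A.trace = ∑ i, (hA.eigenvalues i : ℂ) := by
  nth_rewrite 1 [hA.spectral_theorem]
  rw [Unitary.conjStarAlgAut_apply, Matrix.trace_mul_cycle]
  simp [Matrix.trace_diagonal, Matrix.mem_unitaryGroup_iff'.mp (hA.eigenvectorUnitary).2]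

theorem stmt3 (c : ℝ) (hc : 0 < c)
    (u v : EuclideanSpace ℂ (Fin 2))
    (hu : ‖u‖ ^ 2 = c) (hv : ‖v‖ ^ 2 = c)
    (M : Matrix (Fin 2) (Fin 2) ℂ)
    (hM : M = ((1 / (2 * c) : ℝ) : ℂ) •
      (Matrix.vecMulVec (fun i => u i) (star fun i => u i) +
       Matrix.vecMulVec (fun i => v i) (star fun i => v i))) :
    ∃ hHerm : M.IsHermitian,
      Finset.univ.val.map hHerm.eigenvalues =
        ({1 / 2 + ‖⟪u, v⟫_ℂ‖ / (2 * c), 1 / 2 - ‖⟪u, v⟫_ℂ‖ / (2 * c)} : Multiset ℝ) := by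
  have hc0 : (c : ℂ) ≠ 0 := by exact_mod_cast hc.ne'
  set p : ℂ := ⟪u, v⟫_ℂ with hpdef
  have hp : p = star (u 0) * v 0 + star (u 1) * v 1 := by
    rw [hpdef]
    simp [PiLp.inner_apply, Fin.sum_univ_two, RCLike.star_def]
    ring
  have hps : star p = u 0 * star (v 0) + u 1 * star (v 1) := by
    rw [hp]
    simp [star_add, star_mul', star_star]
  have hu2 : u 0 * star (u 0) + u 1 * star (u 1) = (c : ℂ) := by
    have h1 : ⟪u, u⟫_ℂ = ((‖u‖ : ℂ)) ^ 2 := by exact_mod_cast inner_self_eq_norm_sq_to_K u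
    have h2 : ⟪u, u⟫_ℂ = star (u 0) * u 0 + star (u 1) * u 1 := by
      simp only [PiLp.inner_apply, Fin.sum_univ_two, RCLike.star_def, RCLike.inner_apply]
      ring
    have h3 : ((‖u‖ : ℂ)) ^ 2 = (c : ℂ) := by exact_mod_cast congrArg (Complex.ofReal) hu
    rw [h2, h3] at h1; linear_combination h1
  have hv2 : v 0 * star (v 0) + v 1 * star (v 1) = (c : ℂ) := by
    have h1 : ⟪v, v⟫_ℂ = ((‖v‖ : ℂ)) ^ 2 := by exact_mod_cast inner_self_eq_norm_sq_to_K v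
    have h2 : ⟪v, v⟫_ℂ = star (v 0) * v 0 + star (v 1) * v 1 := by
      simp only [PiLp.inner_apply, Fin.sum_univ_two, RCLike.star_def, RCLike.inner_apply]
      ring
    have h3 : ((‖v‖ : ℂ)) ^ 2 = (c : ℂ) := by exact_mod_cast congrArg (Complex.ofReal) hv
    rw [h2, h3] at h1; linear_combination h1
  have hssimp : ((1 / (2 * c) : ℝ) : ℂ) = 1 / (2 * (c : ℂ)) := by push_cast; ring
  -- Hermitian
  have hHerm : M.IsHermitian := by
    rw [hM]
    ext i j
    simp [Matrix.conjTranspose_apply, Matrix.smul_apply, Matrix.add_apply,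
      Matrix.vecMulVec_apply, Pi.star_apply, star_add, star_mul', star_star,
      Complex.conj_ofReal]
    ring
  refine ⟨hHerm, ?_⟩
  -- trace
  have htr : M.trace = 1 := by
    rw [hM, hssimp]
    simp [Matrix.trace, Matrix.diag, Matrix.vecMulVec_apply, Fin.sum_univ_two]
    simp only [starRingEnd_apply]
    field_simp
    linear_combination hu2 + hv2
  -- determinant
  have hdet : M.det = ((1 / (2 * c) : ℝ) : ℂ) ^ 2 * ((c : ℂ) * c - p * star p) := by
    rw [hM, Matrix.det_fin_two]
    simp only [Matrix.smul_apply, Matrix.add_apply, Matrix.vecMulVec_apply, Pi.star_apply,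
      smul_eq_mul]
    rw [hps, hp]
    set s : ℂ := ((1 / (2 * c) : ℝ) : ℂ)
    linear_combination (s ^ 2 * (u 0 * star (u 0) + u 1 * star (u 1))) * hv2
      + (s ^ 2 * (c : ℂ)) * hu2
  -- eigenvalue equations
  have hsumC : ((hHerm.eigenvalues 0 + hHerm.eigenvalues 1 : ℝ) : ℂ) = 1 := by
    push_cast
    have := trace_eq_sum_eig M hHerm
    rw [htr, Fin.sum_univ_two] at this
    exact this.symm
  have hsum : hHerm.eigenvalues 0 + hHerm.eigenvalues 1 = 1 := by exact_mod_cast hsumC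
  have hppC : p * star p = ((‖p‖ ^ 2 : ℝ) : ℂ) := by
    rw [← starRingEnd_apply]
    push_cast
    exact RCLike.mul_conj p
  have hprodC : ((hHerm.eigenvalues 0 * hHerm.eigenvalues 1 : ℝ) : ℂ) =
      ((1 / 4 - (‖p‖ / (2 * c)) ^ 2 : ℝ) : ℂ) := by
    have h := hHerm.det_eq_prod_eigenvalues
    rw [hdet, Fin.prod_univ_two, hppC, hssimp] at h
    push_cast at h ⊢
    refine h.symm.trans ?_
    field_simp
    ring
  have hprod : hHerm.eigenvalues 0 * hHerm.eigenvalues 1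
      = 1 / 4 - (‖p‖ / (2 * c)) ^ 2 := by exact_mod_cast hprodC
  have hmap : Finset.univ.val.map hHerm.eigenvalues
      = ({hHerm.eigenvalues 0, hHerm.eigenvalues 1} : Multiset ℝ) := rfl
  rw [hmap]
  apply pair_eq_of_sum_prod
  · rw [hsum]; ring
  · rw [hprod]; ring
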